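/- Let Y, A be random variables with A ∈ {0,1}, X a random vector, π(X) = P(A=1|X) ≥ δ > 0 a.s., and m(X) = E[Y|A=1,X]. For any measurable function m̂ with E|m̂(X)| < ∞, E[m̂(X) + (A/π(X))(Y − m̂(X))] = E[m(X)]. That is, the AIPW functional is unbiased when the propensity score is correct, regardless of the outcome model m̂. -/

import Mathlib

open MeasureTheory

/-- Double robustness w.r.t. the propensity score: for an arbitrary integrable outcome model
`m̂(X)` (σ(X)-measurable), `E[m̂(X) + (A/π(X))(Y − m̂(X))] = E[m(X)]` when `π` is the true
propensity score `P(A=1|X) = E[A|X]` (as `A ∈ {0,1}`) and `m(X) = E[Y|A=1,X]` is the true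
conditional outcome mean, characterized by `E[A·(Y − mX) | X] = 0`. -/
theorem stmt1
    {Ω : Type*} {F : MeasurableSpace Ω} (μ : Measure Ω) [IsProbabilityMeasure μ]
    (mΩ : MeasurableSpace Ω) (hle : mΩ ≤ F)
    (A Y πX mX mhat : Ω → ℝ)
    (hA01 : ∀ ω, A ω = 0 ∨ A ω = 1)
    (hπ : πX =ᵐ[μ] μ[A | mΩ])
    (δ : ℝ) (hδ : 0 < δ) (hπδ : ∀ᵐ ω ∂μ, δ ≤ πX ω)
    (hmX_meas : StronglyMeasurable[mΩ] mX)
    (hm : μ[fun ω => A ω * (Y ω - mX ω) | mΩ] =ᵐ[μ] 0)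
    (hmhat_meas : StronglyMeasurable[mΩ] mhat)
    (hint_mhat : Integrable mhat μ)
    (hint_m : Integrable mX μ)
    (hint_AY : Integrable (fun ω => A ω * (Y ω - mhat ω)) μ)
    (hint_U : Integrable (fun ω => mhat ω + A ω / πX ω * (Y ω - mhat ω)) μ) :
    ∫ ω, (mhat ω + A ω / πX ω * (Y ω - mhat ω)) ∂μ = ∫ ω, mX ω ∂μ := by
  have hA1 : ∀ ω, |A ω| ≤ 1 := by
    intro ω; rcases hA01 ω with h | h <;> simp [h]
  have hA_int : Integrable A μ := by
    by_contra h
    have h0 : μ[A|mΩ] = 0 := condExp_of_not_integrable h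
    have hbad : ∀ᵐ ω ∂μ, δ ≤ (0:ℝ) := by
      filter_upwards [hπ, hπδ] with ω h1 h2
      rw [h1, h0] at h2; exact h2
    obtain ⟨ω, hω⟩ := hbad.exists
    linarith
  have hπ'm : StronglyMeasurable[mΩ] (fun ω => ((μ[A|mΩ]) ω)⁻¹) :=
    (stronglyMeasurable_condExp.measurable.inv).stronglyMeasurable
  have hcore : ∀ᵐ ω ∂μ, πX ω = (μ[A|mΩ]) ω ∧ δ ≤ πX ω := hπ.and hπδ
  -- T2 := A/πX * (mX - mhat)
  have hf2 : StronglyMeasurable[mΩ] (fun ω => (mX ω - mhat ω) * ((μ[A|mΩ]) ω)⁻¹) :=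
    (hmX_meas.sub hmhat_meas).mul hπ'm
  have hT2eq : (fun ω => A ω / πX ω * (mX ω - mhat ω)) =ᵐ[μ]
      (fun ω => (mX ω - mhat ω) * ((μ[A|mΩ]) ω)⁻¹) * A := by
    filter_upwards [hcore] with ω ⟨h1, h2⟩
    have hne : πX ω ≠ 0 := (lt_of_lt_of_le hδ h2).ne'
    simp only [Pi.mul_apply, ← h1]
    field_simp
  have hint_T2 : Integrable (fun ω => A ω / πX ω * (mX ω - mhat ω)) μ := by
    refine Integrable.mono ((hint_m.abs.add hint_mhat.abs).const_mul δ⁻¹) ?_ ?_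
    · exact AEStronglyMeasurable.congr
        (((hf2.mono hle).aestronglyMeasurable.mul hA_int.1)) hT2eq.symm
    · filter_upwards [hcore] with ω ⟨h1, h2⟩
      have hπp : 0 < πX ω := lt_of_lt_of_le hδ h2
      simp only [Real.norm_eq_abs]
      have hb : |A ω / πX ω * (mX ω - mhat ω)| ≤ δ⁻¹ * (|mX ω| + |mhat ω|) := by
        rw [abs_mul, abs_div]
        have h3 : |A ω| / |πX ω| ≤ δ⁻¹ := by
          rw [abs_of_pos hπp, div_le_iff₀ hπp]
          calc |A ω| ≤ 1 := hA1 ω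
            _ = δ⁻¹ * δ := (inv_mul_cancel₀ hδ.ne').symm
            _ ≤ δ⁻¹ * πX ω := by gcongr
        exact mul_le_mul h3 (abs_sub _ _) (abs_nonneg _) (inv_pos.mpr hδ).le
      exact hb.trans (le_abs_self _)
  have hint_f2A : Integrable ((fun ω => (mX ω - mhat ω) * ((μ[A|mΩ]) ω)⁻¹) * A) μ :=
    hint_T2.congr hT2eq
  have hpull2 : μ[(fun ω => (mX ω - mhat ω) * ((μ[A|mΩ]) ω)⁻¹) * A|mΩ]
      =ᵐ[μ] (fun ω => (mX ω - mhat ω) * ((μ[A|mΩ]) ω)⁻¹) * μ[A|mΩ] :=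
    condExp_mul_of_stronglyMeasurable_left hf2 hint_f2A hA_int
  have hI2 : ∫ ω, A ω / πX ω * (mX ω - mhat ω) ∂μ = ∫ ω, (mX ω - mhat ω) ∂μ := by
    rw [integral_congr_ae hT2eq]
    have hic := integral_condExp (μ := μ)
      (f := (fun ω => (mX ω - mhat ω) * ((μ[A|mΩ]) ω)⁻¹) * A) hle
    rw [← hic, integral_congr_ae hpull2]
    refine integral_congr_ae ?_
    filter_upwards [hcore] with ω ⟨h1, h2⟩
    have hne : πX ω ≠ 0 := (lt_of_lt_of_le hδ h2).ne'
    simp only [Pi.mul_apply, ← h1]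
    field_simp
  -- T1 := A/πX * (Y - mX)
  have hint_sub : Integrable (fun ω => A ω * (mhat ω - mX ω)) μ := by
    refine Integrable.mono (hint_mhat.abs.add hint_m.abs) ?_ ?_
    · exact hA_int.1.mul ((hmhat_meas.sub hmX_meas).mono hle).aestronglyMeasurable
    · refine Filter.Eventually.of_forall fun ω => ?_
      simp only [Real.norm_eq_abs, abs_mul]
      calc |A ω| * |mhat ω - mX ω| ≤ 1 * |mhat ω - mX ω| :=
            mul_le_mul_of_nonneg_right (hA1 ω) (abs_nonneg _)
        _ = |mhat ω - mX ω| := one_mul _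
        _ ≤ |mhat ω| + |mX ω| := abs_sub _ _
        _ ≤ |(|mhat ω| + |mX ω|)| := le_abs_self _
  have hint_g1 : Integrable (fun ω => A ω * (Y ω - mX ω)) μ := by
    have heq : (fun ω => A ω * (Y ω - mX ω))
        = fun ω => A ω * (Y ω - mhat ω) + A ω * (mhat ω - mX ω) := by
      funext ω; ring
    rw [heq]; exact hint_AY.add hint_sub
  have hT1eq : (fun ω => A ω / πX ω * (Y ω - mX ω)) =ᵐ[μ]
      (fun ω => ((μ[A|mΩ]) ω)⁻¹) * (fun ω => A ω * (Y ω - mX ω)) := by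
    filter_upwards [hcore] with ω ⟨h1, h2⟩
    have hne : πX ω ≠ 0 := (lt_of_lt_of_le hδ h2).ne'
    simp only [Pi.mul_apply, ← h1]
    field_simp
    try ring
  have hint_f1g1 : Integrable
      ((fun ω => ((μ[A|mΩ]) ω)⁻¹) * (fun ω => A ω * (Y ω - mX ω))) μ := by
    refine Integrable.mono (hint_g1.abs.const_mul δ⁻¹) ?_ ?_
    · exact (hπ'm.mono hle).aestronglyMeasurable.mul hint_g1.1
    · filter_upwards [hcore] with ω ⟨h1, h2⟩
      have hπp : 0 < πX ω := lt_of_lt_of_le hδ h2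
      simp only [Pi.mul_apply, Real.norm_eq_abs, ← h1]
      have hi : |(πX ω)⁻¹| ≤ δ⁻¹ := by
        rw [abs_of_pos (inv_pos.mpr hπp)]
        exact inv_anti₀ hδ h2
      rw [abs_mul]
      have hstep : |(πX ω)⁻¹| * |A ω * (Y ω - mX ω)| ≤ δ⁻¹ * |A ω * (Y ω - mX ω)| :=
        mul_le_mul_of_nonneg_right hi (abs_nonneg _)
      exact hstep.trans (le_abs_self _)
  have hpull1 : μ[(fun ω => ((μ[A|mΩ]) ω)⁻¹) * (fun ω => A ω * (Y ω - mX ω))|mΩ]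
      =ᵐ[μ] (fun ω => ((μ[A|mΩ]) ω)⁻¹) * μ[fun ω => A ω * (Y ω - mX ω)|mΩ] :=
    condExp_mul_of_stronglyMeasurable_left hπ'm hint_f1g1 hint_g1
  have hI1 : ∫ ω, A ω / πX ω * (Y ω - mX ω) ∂μ = 0 := by
    rw [integral_congr_ae hT1eq]
    have hic := integral_condExp (μ := μ)
      (f := (fun ω => ((μ[A|mΩ]) ω)⁻¹) * (fun ω => A ω * (Y ω - mX ω))) hle
    rw [← hic, integral_congr_ae hpull1]
    have hz : (fun ω => ((μ[A|mΩ]) ω)⁻¹) * μ[fun ω => A ω * (Y ω - mX ω)|mΩ]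
        =ᵐ[μ] 0 := by
      filter_upwards [hm] with ω h
      simp only [Pi.mul_apply, h, Pi.zero_apply, mul_zero]
    rw [integral_congr_ae hz]
    simp
  have hint_T1 : Integrable (fun ω => A ω / πX ω * (Y ω - mX ω)) μ :=
    hint_f1g1.congr hT1eq.symm
  have hUeq : (fun ω => mhat ω + A ω / πX ω * (Y ω - mhat ω))
      = fun ω => mhat ω + (A ω / πX ω * (Y ω - mX ω) + A ω / πX ω * (mX ω - mhat ω)) := by
    funext ω; ring
  have hTT : Integrable (fun ω => A ω / πX ω * (Y ω - mX ω) + A ω / πX ω * (mX ω - mhat ω)) μ :=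
    hint_T1.add hint_T2
  rw [hUeq, integral_add hint_mhat hTT, integral_add hint_T1 hint_T2,
    hI1, hI2, integral_sub hint_m hint_mhat]
  ring
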